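/- If f : C → D is a surjective morphism of codes, then every maximal codeword of D is the image under f of a maximal codeword of C. -/

import Mathlib

def trunk {n : ℕ} (C : Set (Finset (Fin n))) (σ : Finset (Fin n)) : Set (Finset (Fin n)) :=
  {c | c ∈ C ∧ σ ⊆ c}

def IsTrunk {n : ℕ} (C T : Set (Finset (Fin n))) : Prop :=
  T = ∅ ∨ ∃ σ : Finset (Fin n), T = trunk C σ

def IsMorphism {n m : ℕ} (C : Set (Finset (Fin n))) (D : Set (Finset (Fin m)))
    (f : Finset (Fin n) → Finset (Fin m)) : Prop :=
  (∀ c ∈ C, f c ∈ D) ∧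
  ∀ T : Set (Finset (Fin m)), IsTrunk D T → IsTrunk C {c | c ∈ C ∧ f c ∈ T}

def MaximalCodeword {n : ℕ} (C : Set (Finset (Fin n))) (c : Finset (Fin n)) : Prop :=
  c ∈ C ∧ ∀ c' ∈ C, c ⊆ c' → c = c'

theorem maximal_has_maximal_preimage {n m : ℕ} (C : Set (Finset (Fin n)))
    (D : Set (Finset (Fin m))) (f : Finset (Fin n) → Finset (Fin m))
    (hf : IsMorphism C D f) (hsurj : ∀ d ∈ D, ∃ c ∈ C, f c = d)
    (d : Finset (Fin m)) (hd : MaximalCodeword D d) :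
    ∃ c : Finset (Fin n), MaximalCodeword C c ∧ f c = d := by
  obtain ⟨hfC, hfT⟩ := hf
  obtain ⟨hdD, hdmax⟩ := hd
  set P : Set (Finset (Fin n)) := {c | c ∈ C ∧ f c ∈ trunk D d} with hP
  have hPtrunk : IsTrunk C P := hfT _ (Or.inr ⟨d, rfl⟩)
  -- P is nonempty
  obtain ⟨c₀, hc₀C, hc₀f⟩ := hsurj d hdD
  have hc₀P : c₀ ∈ P := ⟨hc₀C, by rw [hc₀f]; exact ⟨hdD, subset_rfl⟩⟩
  -- every element of P maps to d
  have hPd : ∀ c ∈ P, f c = d := by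
    rintro c ⟨hcC, hfD, hdfc⟩
    exact (hdmax (f c) hfD hdfc).symm
  -- P = trunk C σ
  obtain hPe | ⟨σ, hσ⟩ := hPtrunk
  · exact absurd (hPe ▸ hc₀P) (Set.notMem_empty c₀)
  -- P is finite; pick maximal element
  obtain ⟨c, hcP, hcmax⟩ := P.toFinite.exists_maximalFor id P ⟨c₀, hc₀P⟩
  refine ⟨c, ⟨hcP.1, ?_⟩, hPd c hcP⟩
  intro c' hc' hcc'
  have hc'P : c' ∈ P := by
    rw [hσ] at hcP ⊢
    exact ⟨hc', hcP.2.trans hcc'⟩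
  exact Finset.Subset.antisymm hcc' (hcmax hc'P hcc')
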